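/- Let A → A' be a flat ring map and x ∈ A with A/xA ≅ A'/xA'. Then the map Spec A' ⊔ Spec A_x → Spec A is surjective, and a subset W of Spec A is open if and only if its preimages in Spec A' and Spec A_x are open; i.e., Spec A carries the quotient (pushout) topology from Spec A' ⊔_{Spec A'_x} Spec A_x. -/

import Mathlib

open PrimeSpectrum TensorProduct

section Aux

variable {A : Type*} [CommRing A] {A' : Type*} [CommRing A'] [Algebra A A'] [Module.Flat A A']

/-- Flatness: multiplication by `a ∉ p` detects membership in `p A'`. -/
lemma flat_smul_mem' {p : Ideal A} (hp : p.IsPrime) {a : A} (ha : a ∉ p) {b : A'}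
    (hb : a • b ∈ Ideal.map (algebraMap A A') p) : b ∈ Ideal.map (algebraMap A A') p := by
  have key : ∀ c : A', c ∈ Ideal.map (algebraMap A A') p ↔ c ∈ (p • (⊤ : Submodule A A')) := by
    intro c
    rw [Ideal.smul_top_eq_map]
    exact Iff.rfl
  rw [key] at hb ⊢
  -- smul by a is injective on A ⧸ p
  have hinj : Function.Injective (LinearMap.lsmul A (A ⧸ p) a) := by
    rw [← LinearMap.ker_eq_bot, LinearMap.ker_eq_bot']
    intro y hy
    obtain ⟨y, rfl⟩ := Ideal.Quotient.mk_surjective y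
    have : a • (Ideal.Quotient.mk p y) = Ideal.Quotient.mk p (a * y) := by
      simp [Algebra.smul_def, Ideal.Quotient.algebraMap_eq, ← map_mul]
    rw [LinearMap.lsmul_apply, this, Ideal.Quotient.eq_zero_iff_mem] at hy
    rw [Ideal.Quotient.eq_zero_iff_mem]
    exact (hp.mem_or_mem hy).resolve_left ha
  have hL : LinearMap.lTensor A' (LinearMap.lsmul A (A ⧸ p) a) =
      LinearMap.lsmul A (A' ⊗[A] (A ⧸ p)) a := by
    apply TensorProduct.ext'
    intro b n
    simp [TensorProduct.tmul_smul]
  have hTinj : Function.Injective (LinearMap.lsmul A (A' ⊗[A] (A ⧸ p)) a) := by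
    rw [← hL]
    exact Module.Flat.lTensor_preserves_injective_linearMap _ hinj
  set e := TensorProduct.tensorQuotEquivQuotSMul A' p
  set m : A' ⧸ (p • (⊤ : Submodule A A')) := Submodule.Quotient.mk b with hm
  have hm0 : a • m = 0 := by
    rw [hm, ← Submodule.Quotient.mk_smul, Submodule.Quotient.mk_eq_zero]
    exact hb
  have ht : a • (e.symm m) = 0 := by
    apply e.injective
    rw [map_smul, e.apply_symm_apply, hm0, map_zero]
  have : e.symm m = 0 := by
    apply hTinj
    simp only [LinearMap.lsmul_apply, smul_zero]
    exact ht
  have : m = 0 := by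
    have := congrArg e this
    simpa using this
  rwa [hm, Submodule.Quotient.mk_eq_zero] at this

/-- Going down for flat ring maps. -/
lemma going_down' {q' : Ideal A'} (hq' : q'.IsPrime) {p : Ideal A} (hp : p.IsPrime)
    (hle : p ≤ q'.comap (algebraMap A A')) :
    ∃ q : Ideal A', q.IsPrime ∧ q ≤ q' ∧ q.comap (algebraMap A A') = p := by
  set f := algebraMap A A' with hf
  have h1p : (1 : A) ∉ p := (Ideal.ne_top_iff_one p).mp hp.ne_top
  have h1q : (1 : A') ∉ q' := (Ideal.ne_top_iff_one q').mp hq'.ne_top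
  let T : Submonoid A' :=
    { carrier := {t | ∃ a, a ∉ p ∧ ∃ b, b ∉ q' ∧ t = f a * b}
      one_mem' := ⟨1, h1p, 1, h1q, by simp⟩
      mul_mem' := by
        rintro s t ⟨a, ha, b, hb, rfl⟩ ⟨c, hc, d, hd, rfl⟩
        refine ⟨a * c, fun h => (hp.mem_or_mem h).elim ha hc,
          b * d, fun h => (hq'.mem_or_mem h).elim hb hd, by rw [map_mul]; ring⟩ }
  have hdisj : Disjoint ((p.map f : Ideal A') : Set A') (T : Set A') := by
    rw [Set.disjoint_left]
    rintro t htp ⟨a, ha, b, hb, rfl⟩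
    apply hb
    have hmem : b ∈ p.map f := by
      apply flat_smul_mem' hp ha
      rwa [Algebra.smul_def, ← hf]
    exact Ideal.map_le_iff_le_comap.mpr hle hmem
  obtain ⟨q, hq, hleq, hdq⟩ := Ideal.exists_le_prime_disjoint (p.map f) T hdisj
  refine ⟨q, hq, ?_, le_antisymm ?_ (Ideal.map_le_iff_le_comap.mp hleq)⟩
  · intro b hb
    by_contra hbq
    exact Set.disjoint_left.mp hdq hb ⟨1, h1p, b, hbq, by simp⟩
  · intro a ha
    by_contra hap
    exact Set.disjoint_left.mp hdq ha ⟨a, hap, 1, h1q, by simp⟩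

end Aux

/-- Let `A → A'` be a flat ring map and `x ∈ A` with `A/xA ≅ A'/xA'`.  Then
`Spec A' ⊔ Spec A_x → Spec A` is surjective, and a subset `W ⊆ Spec A` is open iff its
preimages in `Spec A'` and `Spec A_x` are open; i.e. `Spec A` carries the pushout
topology from `Spec A' ⊔_{Spec A'_x} Spec A_x`. -/
theorem stmt19 (A : Type*) [CommRing A] (A' : Type*) [CommRing A'] [Algebra A A']
    [Module.Flat A A'] (x : A)
    (hiso : Function.Bijective
      (Ideal.quotientMap (Ideal.map (algebraMap A A') (Ideal.span {x})) (algebraMap A A')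
        Ideal.le_comap_map)) :
    (∀ p : PrimeSpectrum A,
      (∃ q : PrimeSpectrum A', PrimeSpectrum.comap (algebraMap A A') q = p) ∨
      (∃ u : PrimeSpectrum (Localization.Away x),
        PrimeSpectrum.comap (algebraMap A (Localization.Away x)) u = p)) ∧
    ∀ W : Set (PrimeSpectrum A),
      IsOpen W ↔
        IsOpen (PrimeSpectrum.comap (algebraMap A A') ⁻¹' W) ∧
        IsOpen (PrimeSpectrum.comap (algebraMap A (Localization.Away x)) ⁻¹' W) := by
  set L := Localization.Away x with hL
  set f := algebraMap A A' with hf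
  set g := algebraMap A L with hg
  -- lifting primes containing x to Spec A' via the isomorphism mod x
  have lift : ∀ p' : PrimeSpectrum A, x ∈ p'.asIdeal →
      ∃ q' : PrimeSpectrum A', comap f q' = p' := by
    intro p' hx
    set I := Ideal.span {x} with hI
    set J := I.map f with hJ
    have hIp : I ≤ p'.asIdeal := by
      rw [hI, Ideal.span_le, Set.singleton_subset_iff]
      exact hx
    -- find a point of Spec (A ⧸ I) over p'
    have hmem : p' ∈ Set.range (comap (Ideal.Quotient.mk I)) := by
      rw [range_comap_of_surjective _ _ Ideal.Quotient.mk_surjective]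
      rw [Ideal.mk_ker]
      exact hIp
    obtain ⟨pbar, hpbar⟩ := hmem
    set e := RingEquiv.ofBijective _ hiso with he
    set χ : A' →+* A ⧸ I := (e.symm : A' ⧸ J →+* A ⧸ I).comp (Ideal.Quotient.mk J) with hχ
    refine ⟨comap χ pbar, ?_⟩
    rw [← comap_comp_apply]
    have hcomp : χ.comp f = Ideal.Quotient.mk I := by
      ext a
      have h1 : (Ideal.Quotient.mk J) (f a) = e (Ideal.Quotient.mk I a) := by
        rw [he, RingEquiv.coe_ofBijective, Ideal.quotientMap_mk]
      simp only [hχ, RingHom.comp_apply, h1]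
      exact e.symm_apply_apply _
    rw [hcomp, hpbar]
  -- lifting primes avoiding x to Spec L
  have liftloc : ∀ p : PrimeSpectrum A, x ∉ p.asIdeal →
      ∃ u : PrimeSpectrum L, comap g u = p ∧
        u.asIdeal = Ideal.map g p.asIdeal := by
    intro p hx
    have hdisj : Disjoint ((Submonoid.powers x : Submonoid A) : Set A) (p.asIdeal : Set A) := by
      rw [Set.disjoint_left]
      rintro t ⟨n, rfl⟩ ht
      exact hx (p.isPrime.mem_of_pow_mem n ht)
    have hprime := IsLocalization.isPrime_of_isPrime_disjoint (Submonoid.powers x) L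
      p.asIdeal p.isPrime hdisj
    refine ⟨⟨Ideal.map g p.asIdeal, hprime⟩, ?_, rfl⟩
    apply PrimeSpectrum.ext
    exact IsLocalization.comap_map_of_isPrime_disjoint (Submonoid.powers x) L
      (I := p.asIdeal) p.isPrime hdisj
  constructor
  · intro p
    by_cases hx : x ∈ p.asIdeal
    · exact Or.inl (lift p hx)
    · obtain ⟨u, hu, _⟩ := liftloc p hx
      exact Or.inr ⟨u, hu⟩
  · intro W
    constructor
    · intro hW
      exact ⟨hW.preimage (continuous_comap f), hW.preimage (continuous_comap g)⟩
    · rintro ⟨h1, h2⟩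
      rw [← isClosed_compl_iff]
      set T := Wᶜ with hT
      have hE1 : IsClosed (comap f ⁻¹' T) := by
        rw [hT, Set.preimage_compl]
        exact h1.isClosed_compl
      have hE2 : IsClosed (comap g ⁻¹' T) := by
        rw [hT, Set.preimage_compl]
        exact h2.isClosed_compl
      -- stability of T under specialization
      have hstab : StableUnderSpecialization T := by
        intro p p' hsp hp
        rw [← le_iff_specializes] at hsp
        by_cases hx : x ∈ p'.asIdeal
        · obtain ⟨q', hq'⟩ := lift p' hx
          have hle : p.asIdeal ≤ q'.asIdeal.comap f := by
            show p.asIdeal ≤ (comap f q').asIdeal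
            rw [hq']
            exact hsp
          obtain ⟨q, hq, hleq, hcomap⟩ := going_down' q'.isPrime p.isPrime hle
          have hqmem : (⟨q, hq⟩ : PrimeSpectrum A') ∈ comap f ⁻¹' T := by
            show comap f ⟨q, hq⟩ ∈ T
            have : comap f ⟨q, hq⟩ = p := PrimeSpectrum.ext hcomap
            rwa [this]
          have hq'mem : q' ∈ comap f ⁻¹' T :=
            hE1.stableUnderSpecialization ((le_iff_specializes _ _).mp hleq) hqmem
          rw [← hq']
          exact hq'mem
        · have hxp : x ∉ p.asIdeal := fun h => hx (hsp h)
          obtain ⟨u, hu, huI⟩ := liftloc p hxp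
          obtain ⟨u', hu', huI'⟩ := liftloc p' hx
          have hle : u ≤ u' := by
            show u.asIdeal ≤ u'.asIdeal
            rw [huI, huI']
            exact Ideal.map_mono hsp
          have humem : u ∈ comap g ⁻¹' T := by
            show comap g u ∈ T
            rwa [hu]
          have hu'mem : u' ∈ comap g ⁻¹' T :=
            hE2.stableUnderSpecialization ((le_iff_specializes _ _).mp hle) humem
          rw [← hu']
          exact hu'mem
      -- write T as the image of a closed set under a single comap
      set F : A →+* A' × L := f.prod g with hF
      have hfst : (RingHom.fst A' L).comp F = f := by ext a; rfl
      have hsnd : (RingHom.snd A' L).comp F = g := by ext a; rfl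
      have hfsts : Function.Surjective (RingHom.fst A' L) := fun b => ⟨(b, 0), rfl⟩
      have hsnds : Function.Surjective (RingHom.snd A' L) := fun b => ⟨(0, b), rfl⟩
      set Z : Set (PrimeSpectrum (A' × L)) :=
        comap (RingHom.fst A' L) '' (comap f ⁻¹' T) ∪
          comap (RingHom.snd A' L) '' (comap g ⁻¹' T) with hZ
      have hZclosed : IsClosed Z :=
        ((isClosedEmbedding_comap_of_surjective _ _ hfsts).isClosedMap _ hE1).union
          ((isClosedEmbedding_comap_of_surjective _ _ hsnds).isClosedMap _ hE2)
      have himg : comap F '' Z = T := by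
        apply Set.Subset.antisymm
        · rw [hZ, Set.image_union]
          apply Set.union_subset
          · rintro _ ⟨_, ⟨e, he, rfl⟩, rfl⟩
            rw [← comap_comp_apply, hfst]
            exact he
          · rintro _ ⟨_, ⟨e, he, rfl⟩, rfl⟩
            rw [← comap_comp_apply, hsnd]
            exact he
        · intro p hp
          by_cases hx : x ∈ p.asIdeal
          · obtain ⟨q', hq'⟩ := lift p hx
            refine ⟨comap (RingHom.fst A' L) q', Or.inl ⟨q', ?_, rfl⟩, ?_⟩
            · show comap f q' ∈ T
              rwa [hq']
            · rw [← comap_comp_apply, hfst, hq']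
          · obtain ⟨u, hu, _⟩ := liftloc p hx
            refine ⟨comap (RingHom.snd A' L) u, Or.inr ⟨u, ?_, rfl⟩, ?_⟩
            · show comap g u ∈ T
              rwa [hu]
            · rw [← comap_comp_apply, hsnd, hu]
      rw [← himg] at hstab ⊢
      exact isClosed_image_of_stableUnderSpecialization F Z hZclosed hstab
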